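/- Let (A,B) ∼ R-ER(P) on n vertices with R_{ij} > 0 and P_{ij} ∈ (0,1) for i ≠ j, and set ε := min_{i≠j} 2 R_{ij} P_{ij}(1 − P_{ij}). Let Q ∈ Π_n be a permutation matrix corresponding to a permutation π that moves exactly k points (i.e., has n − k fixed points), and let T be the number of 2-cycles (transpositions) in the cycle decomposition of π. Then E‖AQ − QB‖_F² − E‖A − B‖_F² ≥ ε( (n−k)k + k(k−1)/2 − T ). -/

import Mathlib

open Filter MeasureTheory ProbabilityTheory
open scoped ENNReal

namespace CorrER

/-- The permutation matrix of the permutation `π`. -/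
def permMatrix {n : ℕ} (π : Equiv.Perm (Fin n)) : Matrix (Fin n) (Fin n) ℝ :=
  Matrix.of fun i j => if π j = i then (1 : ℝ) else 0

/-- Squared Frobenius norm of a matrix. -/
def frobSq {n : ℕ} (M : Matrix (Fin n) (Fin n) ℝ) : ℝ :=
  ∑ i, ∑ j, M i j ^ 2

/-- Frobenius norm of a matrix. -/
noncomputable def frob {n : ℕ} (M : Matrix (Fin n) (Fin n) ℝ) : ℝ :=
  Real.sqrt (frobSq M)

/-- `δ(Q) = ‖A Q − Q B‖_F` for the permutation matrix `Q` of `π`. -/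
noncomputable def gmDelta {n : ℕ} {Ω : Type*} (A B : Ω → Matrix (Fin n) (Fin n) ℝ)
    (π : Equiv.Perm (Fin n)) (ω : Ω) : ℝ :=
  frob (A ω * permMatrix π - permMatrix π * B ω)

/-- `(A, B) ∼ R-ER(P)`: a pair of random symmetric hollow 0–1 matrices such that the pairs of
edge indicators `(A_{ij}, B_{ij})` are mutually independent across unordered pairs `{i,j}`,
and for each `i < j` the indicators `A_{ij}` and `B_{ij}` are each `Bernoulli(P_{ij})`
distributed with correlation `R_{ij}` (equivalently,
`E[A_{ij} B_{ij}] = P_{ij}² + R_{ij} P_{ij}(1 − P_{ij})`). -/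
structure IsCorrER (n : ℕ) {Ω : Type*} [MeasurableSpace Ω] (μ : Measure Ω)
    (A B : Ω → Matrix (Fin n) (Fin n) ℝ) (P R : Matrix (Fin n) (Fin n) ℝ) : Prop where
  measA : ∀ i j, Measurable fun ω => A ω i j
  measB : ∀ i j, Measurable fun ω => B ω i j
  zeroOneA : ∀ ω i j, A ω i j = 0 ∨ A ω i j = 1
  zeroOneB : ∀ ω i j, B ω i j = 0 ∨ B ω i j = 1
  symmA : ∀ ω i j, A ω i j = A ω j i
  symmB : ∀ ω i j, B ω i j = B ω j i
  hollowA : ∀ ω i, A ω i i = 0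
  hollowB : ∀ ω i, B ω i i = 0
  symmP : ∀ i j, P i j = P j i
  symmR : ∀ i j, R i j = R j i
  memP : ∀ i j, P i j ∈ Set.Icc (0 : ℝ) 1
  memR : ∀ i j, R i j ∈ Set.Icc (-1 : ℝ) 1
  indep : iIndepFun
    (fun (p : {p : Fin n × Fin n // p.1 < p.2}) ω => (A ω p.1.1 p.1.2, B ω p.1.1 p.1.2)) μ
  margA : ∀ i j : Fin n, i < j → μ {ω | A ω i j = 1} = ENNReal.ofReal (P i j)
  margB : ∀ i j : Fin n, i < j → μ {ω | B ω i j = 1} = ENNReal.ofReal (P i j)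
  corr : ∀ i j : Fin n, i < j →
    ∫ ω, A ω i j * B ω i j ∂μ = P i j ^ 2 + R i j * P i j * (1 - P i j)

end CorrER

namespace CorrERAux

open CorrER

variable {n : ℕ} {Ω : Type} [MeasurableSpace Ω] {μ : MeasureTheory.Measure Ω}
  [IsProbabilityMeasure μ]
  {A B : Ω → Matrix (Fin n) (Fin n) ℝ} {P R : Matrix (Fin n) (Fin n) ℝ}

lemma integrable_of_le_one {f : Ω → ℝ} (hf : Measurable f) (hb : ∀ ω, |f ω| ≤ 1) :
    Integrable f μ :=
  (integrable_const (1:ℝ)).mono' hf.aestronglyMeasurable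
    (Filter.Eventually.of_forall fun ω => by simpa using hb ω)

lemma abs01 {x : ℝ} (h : x = 0 ∨ x = 1) : |x| ≤ 1 := by rcases h with h|h <;> simp [h]

section
variable (h : IsCorrER n μ A B P R)
include h

lemma intA (i j : Fin n) : Integrable (fun ω => A ω i j) μ :=
  integrable_of_le_one (h.measA i j) fun ω => abs01 (h.zeroOneA ω i j)

lemma intB (i j : Fin n) : Integrable (fun ω => B ω i j) μ :=
  integrable_of_le_one (h.measB i j) fun ω => abs01 (h.zeroOneB ω i j)

lemma intAB (a b i j : Fin n) : Integrable (fun ω => A ω a b * B ω i j) μ :=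
  integrable_of_le_one ((h.measA a b).mul (h.measB i j)) fun ω => by
    rcases h.zeroOneA ω a b with h1|h1 <;> rcases h.zeroOneB ω i j with h2|h2 <;>
      simp [h1, h2]

lemma eA_lt {i j : Fin n} (hij : i < j) : ∫ ω, A ω i j ∂μ = P i j := by
  have hset : MeasurableSet {ω | A ω i j = 1} := h.measA i j (measurableSet_singleton 1)
  have heq : (fun ω => A ω i j) = Set.indicator {ω | A ω i j = 1} (fun _ => (1:ℝ)) := by
    funext ω
    by_cases hω : A ω i j = 1
    · simp [Set.indicator, hω]
    · have h0 : A ω i j = 0 := (h.zeroOneA ω i j).resolve_right hω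
      simp [Set.indicator, hω, h0]
  rw [heq, integral_indicator_const (1:ℝ) hset, measureReal_def, h.margA i j hij,
    ENNReal.toReal_ofReal (h.memP i j).1, smul_eq_mul, mul_one]

lemma eB_lt {i j : Fin n} (hij : i < j) : ∫ ω, B ω i j ∂μ = P i j := by
  have hset : MeasurableSet {ω | B ω i j = 1} := h.measB i j (measurableSet_singleton 1)
  have heq : (fun ω => B ω i j) = Set.indicator {ω | B ω i j = 1} (fun _ => (1:ℝ)) := by
    funext ω
    by_cases hω : B ω i j = 1
    · simp [Set.indicator, hω]
    · have h0 : B ω i j = 0 := (h.zeroOneB ω i j).resolve_right hω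
      simp [Set.indicator, hω, h0]
  rw [heq, integral_indicator_const (1:ℝ) hset, measureReal_def, h.margB i j hij,
    ENNReal.toReal_ofReal (h.memP i j).1, smul_eq_mul, mul_one]

lemma eA (i j : Fin n) (hij : i ≠ j) : ∫ ω, A ω i j ∂μ = P i j := by
  rcases lt_or_gt_of_ne hij with hlt | hgt
  · exact eA_lt h hlt
  · calc ∫ ω, A ω i j ∂μ = ∫ ω, A ω j i ∂μ := by simp_rw [h.symmA _ i j]
      _ = P j i := eA_lt h hgt
      _ = P i j := (h.symmP i j).symm

lemma eB (i j : Fin n) (hij : i ≠ j) : ∫ ω, B ω i j ∂μ = P i j := by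
  rcases lt_or_gt_of_ne hij with hlt | hgt
  · exact eB_lt h hlt
  · calc ∫ ω, B ω i j ∂μ = ∫ ω, B ω j i ∂μ := by simp_rw [h.symmB _ i j]
      _ = P j i := eB_lt h hgt
      _ = P i j := (h.symmP i j).symm

lemma eAB (i j : Fin n) (hij : i ≠ j) :
    ∫ ω, A ω i j * B ω i j ∂μ = P i j ^ 2 + R i j * P i j * (1 - P i j) := by
  rcases lt_or_gt_of_ne hij with hlt | hgt
  · exact h.corr i j hlt
  · have e1 : ∫ ω, A ω i j * B ω i j ∂μ = ∫ ω, A ω j i * B ω j i ∂μ := by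
      simp_rw [h.symmA _ i j, h.symmB _ i j]
    calc ∫ ω, A ω i j * B ω i j ∂μ
        = P j i ^ 2 + R j i * P j i * (1 - P j i) := by rw [e1]; exact h.corr j i hgt
      _ = P i j ^ 2 + R i j * P i j * (1 - P i j) := by rw [← h.symmP i j, ← h.symmR i j]

lemma eMul_sorted {a b i j : Fin n} (hab : a < b) (hij : i < j) (hne : (a, b) ≠ (i, j)) :
    ∫ ω, A ω a b * B ω i j ∂μ = P a b * P i j := by
  have hpq : (⟨(a,b), hab⟩ : {p : Fin n × Fin n // p.1 < p.2}) ≠ ⟨(i,j), hij⟩ := by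
    simpa [Subtype.ext_iff] using hne
  have hAB : IndepFun (fun ω => A ω a b) (fun ω => B ω i j) μ :=
    (h.indep.indepFun hpq).comp measurable_fst measurable_snd
  have := hAB.integral_fun_mul_eq_mul_integral (intA h a b).aestronglyMeasurable (intB h i j).aestronglyMeasurable
  rw [this, eA_lt h hab, eB_lt h hij]

lemma eC_indep (π : Equiv.Perm (Fin n)) {i j : Fin n} (hij : i ≠ j)
    (h1 : ¬(π i = i ∧ π j = j)) (h2 : ¬(π i = j ∧ π j = i)) :
    ∫ ω, A ω (π i) (π j) * B ω i j ∂μ = P (π i) (π j) * P i j := by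
  have hab : π i ≠ π j := fun e => hij (π.injective e)
  rcases lt_or_gt_of_ne hab with hab' | hab' <;> rcases lt_or_gt_of_ne hij with hij' | hij'
  · exact eMul_sorted h hab' hij' (by
      rintro he
      rw [Prod.mk.injEq] at he
      exact h1 ⟨he.1, he.2⟩)
  · have e1 : ∀ ω, B ω i j = B ω j i := fun ω => h.symmB ω i j
    simp_rw [e1, h.symmP i j]
    exact eMul_sorted h hab' hij' (by
      rintro he
      rw [Prod.mk.injEq] at he
      exact h2 ⟨he.1, he.2⟩)
  · have e1 : ∀ ω, A ω (π i) (π j) = A ω (π j) (π i) := fun ω => h.symmA ω _ _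
    simp_rw [e1, h.symmP (π i) (π j)]
    exact eMul_sorted h hab' hij' (by
      rintro he
      rw [Prod.mk.injEq] at he
      exact h2 ⟨he.2, he.1⟩)
  · have e1 : ∀ ω, A ω (π i) (π j) = A ω (π j) (π i) := fun ω => h.symmA ω _ _
    have e2 : ∀ ω, B ω i j = B ω j i := fun ω => h.symmB ω i j
    simp_rw [e1, e2, h.symmP (π i) (π j), h.symmP i j]
    exact eMul_sorted h hab' hij' (by
      rintro he
      rw [Prod.mk.injEq] at he
      exact h1 ⟨he.2, he.1⟩)

end

lemma frobSq_perm (π : Equiv.Perm (Fin n)) (M N : Matrix (Fin n) (Fin n) ℝ) :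
    frobSq (M * permMatrix π - permMatrix π * N)
      = ∑ p : Fin n × Fin n, (M (π p.1) (π p.2) - N p.1 p.2) ^ 2 := by
  have hMQ : ∀ i j, (M * permMatrix π) i j = M i (π j) := by
    intro i j
    simp [Matrix.mul_apply, permMatrix, mul_ite, mul_one, mul_zero, eq_comm]
  have hQN : ∀ i j, (permMatrix π * N) i j = N (π.symm i) j := by
    intro i j
    simp only [Matrix.mul_apply, permMatrix, Matrix.of_apply, ite_mul, one_mul, zero_mul]
    simp_rw [Equiv.apply_eq_iff_eq_symm_apply, eq_comm]
    simp
  rw [Fintype.sum_prod_type]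
  unfold frobSq
  simp_rw [Matrix.sub_apply, hMQ, hQN]
  exact (Fintype.sum_equiv π
    (fun i => ∑ j, (M (π i) (π j) - N i j) ^ 2)
    (fun i => ∑ j, (M i (π j) - N (π.symm i) j) ^ 2)
    (fun i => by simp)).symm

section
variable (h : IsCorrER n μ A B P R)
include h

lemma int_expand (σ : Fin n × Fin n → Fin n × Fin n) :
    ∫ ω, ∑ p : Fin n × Fin n, (A ω (σ p).1 (σ p).2 - B ω p.1 p.2) ^ 2 ∂μ
      = ∑ p : Fin n × Fin n, ((∫ ω, A ω (σ p).1 (σ p).2 ∂μ) + (∫ ω, B ω p.1 p.2 ∂μ)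
          - 2 * ∫ ω, A ω (σ p).1 (σ p).2 * B ω p.1 p.2 ∂μ) := by
  have hpt : ∀ (p : Fin n × Fin n) ω,
      (A ω (σ p).1 (σ p).2 - B ω p.1 p.2) ^ 2
        = A ω (σ p).1 (σ p).2 + B ω p.1 p.2 - 2 * (A ω (σ p).1 (σ p).2 * B ω p.1 p.2) := by
    intro p ω
    rcases h.zeroOneA ω (σ p).1 (σ p).2 with h1|h1 <;>
      rcases h.zeroOneB ω p.1 p.2 with h2|h2 <;> rw [h1, h2] <;> ring
  simp_rw [hpt]
  rw [integral_finset_sum (f := fun (p : Fin n × Fin n) ω =>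
      A ω (σ p).1 (σ p).2 + B ω p.1 p.2 - 2 * (A ω (σ p).1 (σ p).2 * B ω p.1 p.2))
    Finset.univ (fun p _ =>
    (((intA h _ _).add (intB h _ _)).sub ((intAB h _ _ _ _).const_mul 2)))]
  refine Finset.sum_congr rfl fun p _ => ?_
  have hI1 : Integrable (fun ω => A ω (σ p).1 (σ p).2 + B ω p.1 p.2) μ :=
    (intA h _ _).add (intB h _ _)
  have hI2 : Integrable (fun ω => 2 * (A ω (σ p).1 (σ p).2 * B ω p.1 p.2)) μ :=
    (intAB h _ _ _ _).const_mul 2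
  rw [integral_sub hI1 hI2, integral_add (intA h _ _) (intB h _ _), integral_const_mul]

end

lemma card_S (π : Equiv.Perm (Fin n)) (k T : ℕ)
    (hk : k = (Finset.univ.filter fun i : Fin n => π i ≠ i).card)
    (hT : T = (Finset.univ.filter fun p : Fin n × Fin n =>
      p.1 < p.2 ∧ π p.1 = p.2 ∧ π p.2 = p.1).card) :
    (((Finset.univ.filter (fun p : Fin n × Fin n => p.1 ≠ p.2 ∧
        ¬(π p.1 = p.1 ∧ π p.2 = p.2) ∧ ¬(π p.1 = p.2 ∧ π p.2 = p.1))).card : ℝ))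
      = 2 * (((n : ℝ) - k) * k + (k : ℝ) * ((k : ℝ) - 1) / 2 - T) := by
  classical
  set S : Finset (Fin n × Fin n) := Finset.univ.filter (fun p : Fin n × Fin n => p.1 ≠ p.2 ∧
        ¬(π p.1 = p.1 ∧ π p.2 = p.2) ∧ ¬(π p.1 = p.2 ∧ π p.2 = p.1)) with hS
  set Fix : Finset (Fin n) := Finset.univ.filter (fun i => π i = i) with hFix
  set m := Fix.card with hm
  have hmk : m + k = n := by
    rw [hm, hFix, hk]
    have := Finset.card_filter_add_card_filter_not
      (s := (Finset.univ : Finset (Fin n))) (fun i : Fin n => π i = i)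
    simpa using this
  set O : Finset (Fin n × Fin n) := (Finset.univ : Finset (Fin n)).offDiag with hO
  have hOcard : O.card = n * n - n := by
    rw [hO, Finset.offDiag_card]
    simp
  have hSO : S = O.filter
      (fun p => ¬((π p.1 = p.1 ∧ π p.2 = p.2) ∨ (π p.1 = p.2 ∧ π p.2 = p.1))) := by
    ext p
    simp only [hS, hO, Finset.mem_filter, Finset.mem_offDiag, Finset.mem_univ, true_and, not_or]
    try tauto
  have h1 : (O.filter (fun p => (π p.1 = p.1 ∧ π p.2 = p.2) ∨
      (π p.1 = p.2 ∧ π p.2 = p.1))).card + S.card = O.card := by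
    rw [hSO]
    exact Finset.card_filter_add_card_filter_not _
  have hFT : O.filter (fun p => (π p.1 = p.1 ∧ π p.2 = p.2) ∨ (π p.1 = p.2 ∧ π p.2 = p.1))
      = (O.filter (fun p => π p.1 = p.1 ∧ π p.2 = p.2))
        ∪ (O.filter (fun p => π p.1 = p.2 ∧ π p.2 = p.1)) := Finset.filter_or _ _ _
  have hdisj : Disjoint (O.filter (fun p => π p.1 = p.1 ∧ π p.2 = p.2))
      (O.filter (fun p => π p.1 = p.2 ∧ π p.2 = p.1)) := by
    rw [Finset.disjoint_left]
    rintro p hp1 hp2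
    simp only [Finset.mem_filter, hO, Finset.mem_offDiag] at hp1 hp2
    exact hp1.1.2.2 (hp1.2.1.symm.trans hp2.2.1)
  have hfix : O.filter (fun p => π p.1 = p.1 ∧ π p.2 = p.2) = Fix.offDiag := by
    ext p
    simp only [Finset.mem_filter, hO, hFix, Finset.mem_offDiag, Finset.mem_univ, true_and]
    tauto
  have hfixcard : (O.filter (fun p => π p.1 = p.1 ∧ π p.2 = p.2)).card = m * m - m := by
    rw [hfix, Finset.offDiag_card, hm]
  set W : Finset (Fin n × Fin n) := O.filter (fun p => π p.1 = p.2 ∧ π p.2 = p.1) with hW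
  have hW1 : W.filter (fun p => p.1 < p.2) = Finset.univ.filter (fun p : Fin n × Fin n =>
      p.1 < p.2 ∧ π p.1 = p.2 ∧ π p.2 = p.1) := by
    ext p
    simp only [hW, hO, Finset.mem_filter, Finset.mem_offDiag, Finset.mem_univ, true_and]
    constructor
    · rintro ⟨⟨_, hsw⟩, hlt⟩
      exact ⟨hlt, hsw⟩
    · rintro ⟨hlt, hsw⟩
      exact ⟨⟨ne_of_lt hlt, hsw⟩, hlt⟩
  have hW2 : (W.filter (fun p => ¬ p.1 < p.2)).card
      = (Finset.univ.filter (fun p : Fin n × Fin n =>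
        p.1 < p.2 ∧ π p.1 = p.2 ∧ π p.2 = p.1)).card := by
    apply Finset.card_nbij' Prod.swap Prod.swap
    · rintro ⟨a, b⟩ hp
      simp only [hW, hO, Finset.mem_coe, Finset.mem_filter, Finset.mem_offDiag, Finset.mem_univ, true_and] at hp ⊢
      obtain ⟨⟨hne, hsw1, hsw2⟩, hnlt⟩ := hp
      exact ⟨lt_of_le_of_ne (not_lt.mp hnlt) (Ne.symm hne), hsw2, hsw1⟩
    · rintro ⟨a, b⟩ hp
      simp only [hW, hO, Finset.mem_coe, Finset.mem_filter, Finset.mem_offDiag, Finset.mem_univ, true_and] at hp ⊢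
      obtain ⟨hlt, hsw1, hsw2⟩ := hp
      exact ⟨⟨(ne_of_lt hlt).symm, hsw2, hsw1⟩, not_lt.mpr (le_of_lt hlt)⟩
    · intro a _; exact Prod.swap_swap a
    · intro a _; exact Prod.swap_swap a
  have hWcard : W.card = T + T := by
    rw [← Finset.card_filter_add_card_filter_not (s := W) (fun p => p.1 < p.2),
      hW1, hW2, hT]
  have htotal : (m * m - m) + (T + T) + S.card = n * n - n := by
    rw [← hOcard, ← h1, hFT, Finset.card_union_of_disjoint hdisj, hfixcard, hWcard]
  have hmm : m ≤ m * m := by nlinarith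
  have hnn : n ≤ n * n := by nlinarith
  have hcast : ((m : ℝ) * m - m) + (T + T) + S.card = (n : ℝ) * n - n := by
    have := congrArg (fun x : ℕ => (x : ℝ)) htotal
    push_cast [Nat.cast_sub hmm, Nat.cast_sub hnn] at this
    linarith
  have hmR : (m : ℝ) = (n : ℝ) - k := by
    have := congrArg (fun x : ℕ => (x : ℝ)) hmk
    push_cast at this
    linarith
  have : (S.card : ℝ) = (n : ℝ) * n - n - ((m : ℝ) * m - m) - (T + T) := by linarith
  rw [this, hmR]
  ring

lemma frobSq_sub (M N : Matrix (Fin n) (Fin n) ℝ) :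
    frobSq (M - N) = ∑ p : Fin n × Fin n, (M p.1 p.2 - N p.1 p.2) ^ 2 := by
  simp [frobSq, Matrix.sub_apply, Fintype.sum_prod_type]

end CorrERAux


/-- Let `(A,B) ∼ R-ER(P)` on `n` vertices with `R_{ij} > 0` and
`P_{ij} ∈ (0,1)` for `i ≠ j`, and `ε := min_{i≠j} 2 R_{ij} P_{ij}(1 − P_{ij})`. If `Q` is the
permutation matrix of a permutation `π` moving exactly `k` points, and `T` is the number of
2-cycles of `π`, then `E‖AQ − QB‖_F² − E‖A − B‖_F² ≥ ε((n−k)k + k(k−1)/2 − T)`. -/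
theorem expected_delta_gap
    (n : ℕ) {Ω : Type} [MeasurableSpace Ω] (μ : Measure Ω) [IsProbabilityMeasure μ]
    (A B : Ω → Matrix (Fin n) (Fin n) ℝ) (P R : Matrix (Fin n) (Fin n) ℝ)
    (hmodel : CorrER.IsCorrER n μ A B P R)
    (hR : ∀ i j : Fin n, i ≠ j → 0 < R i j)
    (hP : ∀ i j : Fin n, i ≠ j → P i j ∈ Set.Ioo (0 : ℝ) 1)
    (ε : ℝ)
    (hε : (∀ i j : Fin n, i ≠ j → ε ≤ 2 * R i j * P i j * (1 - P i j)) ∧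
      ∃ i j : Fin n, i ≠ j ∧ ε = 2 * R i j * P i j * (1 - P i j))
    (π : Equiv.Perm (Fin n)) (k T : ℕ)
    (hk : k = (Finset.univ.filter fun i : Fin n => π i ≠ i).card)
    (hT : T = (Finset.univ.filter fun p : Fin n × Fin n =>
      p.1 < p.2 ∧ π p.1 = p.2 ∧ π p.2 = p.1).card) :
    (∫ ω, CorrER.frobSq (A ω * CorrER.permMatrix π - CorrER.permMatrix π * B ω) ∂μ) -
        (∫ ω, CorrER.frobSq (A ω - B ω) ∂μ) ≥
      ε * (((n : ℝ) - k) * k + (k : ℝ) * ((k : ℝ) - 1) / 2 - T) := by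
  classical
  open CorrERAux in
  -- Step 1: expectation of the permuted Frobenius norm
  have hE1 : (∫ ω, CorrER.frobSq (A ω * CorrER.permMatrix π - CorrER.permMatrix π * B ω) ∂μ)
      = ∑ p : Fin n × Fin n, ((∫ ω, A ω (π p.1) (π p.2) ∂μ) + (∫ ω, B ω p.1 p.2 ∂μ)
          - 2 * ∫ ω, A ω (π p.1) (π p.2) * B ω p.1 p.2 ∂μ) := by
    have h0 : (∫ ω, CorrER.frobSq (A ω * CorrER.permMatrix π - CorrER.permMatrix π * B ω) ∂μ)
        = ∫ ω, ∑ p : Fin n × Fin n, (A ω (π p.1) (π p.2) - B ω p.1 p.2) ^ 2 ∂μ := by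
      congr 1
      funext ω
      exact CorrERAux.frobSq_perm π (A ω) (B ω)
    rw [h0]
    simpa using CorrERAux.int_expand hmodel (fun p => (π p.1, π p.2))
  have hE2 : (∫ ω, CorrER.frobSq (A ω - B ω) ∂μ)
      = ∑ p : Fin n × Fin n, ((∫ ω, A ω p.1 p.2 ∂μ) + (∫ ω, B ω p.1 p.2 ∂μ)
          - 2 * ∫ ω, A ω p.1 p.2 * B ω p.1 p.2 ∂μ) := by
    have h0 : (∫ ω, CorrER.frobSq (A ω - B ω) ∂μ)
        = ∫ ω, ∑ p : Fin n × Fin n, (A ω p.1 p.2 - B ω p.1 p.2) ^ 2 ∂μ := by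
      congr 1
      funext ω
      exact CorrERAux.frobSq_sub (A ω) (B ω)
    rw [h0]
    simpa using CorrERAux.int_expand hmodel id
  -- Step 2: the difference equals twice the sum of covariance gaps
  have hA_reindex : ∑ p : Fin n × Fin n, (∫ ω, A ω (π p.1) (π p.2) ∂μ)
      = ∑ p : Fin n × Fin n, ∫ ω, A ω p.1 p.2 ∂μ := by
    exact Fintype.sum_equiv (Equiv.prodCongr π π) _ _ (fun p => by simp)
  have hD : (∫ ω, CorrER.frobSq (A ω * CorrER.permMatrix π - CorrER.permMatrix π * B ω) ∂μ) -
        (∫ ω, CorrER.frobSq (A ω - B ω) ∂μ)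
      = ∑ p : Fin n × Fin n, 2 * ((∫ ω, A ω p.1 p.2 * B ω p.1 p.2 ∂μ)
          - ∫ ω, A ω (π p.1) (π p.2) * B ω p.1 p.2 ∂μ) := by
    rw [hE1, hE2, ← Finset.sum_sub_distrib]
    have : ∀ p : Fin n × Fin n,
        ((∫ ω, A ω (π p.1) (π p.2) ∂μ) + (∫ ω, B ω p.1 p.2 ∂μ)
          - 2 * ∫ ω, A ω (π p.1) (π p.2) * B ω p.1 p.2 ∂μ)
        - ((∫ ω, A ω p.1 p.2 ∂μ) + (∫ ω, B ω p.1 p.2 ∂μ)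
          - 2 * ∫ ω, A ω p.1 p.2 * B ω p.1 p.2 ∂μ)
        = ((∫ ω, A ω (π p.1) (π p.2) ∂μ) - (∫ ω, A ω p.1 p.2 ∂μ))
          + 2 * ((∫ ω, A ω p.1 p.2 * B ω p.1 p.2 ∂μ)
            - ∫ ω, A ω (π p.1) (π p.2) * B ω p.1 p.2 ∂μ) := fun p => by ring
    rw [Finset.sum_congr rfl (fun p _ => this p), Finset.sum_add_distrib,
      Finset.sum_sub_distrib, hA_reindex, sub_self, zero_add]
  rw [hD]
  -- Step 3: restrict the sum to the "moved-pair" set S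
  set S : Finset (Fin n × Fin n) := Finset.univ.filter (fun p : Fin n × Fin n => p.1 ≠ p.2 ∧
        ¬(π p.1 = p.1 ∧ π p.2 = p.2) ∧ ¬(π p.1 = p.2 ∧ π p.2 = p.1)) with hS
  have hvanish : ∀ p ∈ Finset.univ, p ∉ S →
      2 * ((∫ ω, A ω p.1 p.2 * B ω p.1 p.2 ∂μ)
        - ∫ ω, A ω (π p.1) (π p.2) * B ω p.1 p.2 ∂μ) = 0 := by
    intro p _ hp
    simp only [hS, Finset.mem_filter, Finset.mem_univ, true_and] at hp
    push_neg at hp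
    by_cases hpp : p.1 = p.2
    · have hB0 : ∀ ω, B ω p.1 p.2 = 0 := fun ω => by
        rw [← hpp]
        exact hmodel.hollowB ω p.1
      simp [hB0]
    by_cases hfix : π p.1 = p.1 ∧ π p.2 = p.2
    · rw [hfix.1, hfix.2]
      ring
    · have hswap := hp hpp (fun e1 e2 => hfix ⟨e1, e2⟩)
      have hAeq : ∀ ω, A ω (π p.1) (π p.2) = A ω p.1 p.2 := fun ω => by
        rw [hswap.1, hswap.2]
        exact (hmodel.symmA ω p.1 p.2).symm
      simp_rw [hAeq]
      ring
  rw [← Finset.sum_subset (Finset.subset_univ S) hvanish]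
  -- Step 4: evaluate the terms on S
  have hterm : ∀ p ∈ S, 2 * ((∫ ω, A ω p.1 p.2 * B ω p.1 p.2 ∂μ)
        - ∫ ω, A ω (π p.1) (π p.2) * B ω p.1 p.2 ∂μ)
      = 2 * (P p.1 p.2 ^ 2 - P (π p.1) (π p.2) * P p.1 p.2)
        + 2 * R p.1 p.2 * P p.1 p.2 * (1 - P p.1 p.2) := by
    intro p hp
    simp only [hS, Finset.mem_filter, Finset.mem_univ, true_and] at hp
    obtain ⟨hne, h1, h2⟩ := hp
    rw [CorrERAux.eAB hmodel p.1 p.2 hne, CorrERAux.eC_indep hmodel π hne h1 h2]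
    ring
  rw [Finset.sum_congr rfl hterm, Finset.sum_add_distrib]
  -- Step 5: the quadratic part is nonnegative
  have hswapsum : ∑ p ∈ S, P (π p.1) (π p.2) ^ 2 = ∑ p ∈ S, P p.1 p.2 ^ 2 := by
    apply Finset.sum_nbij' (fun p => (π p.1, π p.2)) (fun p => (π.symm p.1, π.symm p.2))
    · intro p hp
      simp only [hS, Finset.mem_filter, Finset.mem_univ, true_and] at hp ⊢
      obtain ⟨hne, h1, h2⟩ := hp
      refine ⟨fun e => hne (π.injective e), ?_, ?_⟩
      · rintro ⟨e1, e2⟩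
        exact h1 ⟨π.injective e1, π.injective e2⟩
      · rintro ⟨e1, e2⟩
        exact h2 ⟨π.injective e1, π.injective e2⟩
    · intro p hp
      simp only [hS, Finset.mem_filter, Finset.mem_univ, true_and] at hp ⊢
      obtain ⟨hne, h1, h2⟩ := hp
      refine ⟨fun e => hne (π.symm.injective e), ?_, ?_⟩
      · rintro ⟨e1, e2⟩
        rw [Equiv.apply_symm_apply] at e1 e2
        refine h1 ⟨?_, ?_⟩
        · conv_lhs => rw [e1]
          rw [Equiv.apply_symm_apply]
        · conv_lhs => rw [e2]
          rw [Equiv.apply_symm_apply]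
      · rintro ⟨e1, e2⟩
        rw [Equiv.apply_symm_apply] at e1 e2
        refine h2 ⟨?_, ?_⟩
        · conv_lhs => rw [e1]
          rw [Equiv.apply_symm_apply]
        · conv_lhs => rw [e2]
          rw [Equiv.apply_symm_apply]
    · intro p _
      simp
    · intro p _
      simp
    · intro p _
      simp
  have hquad : 0 ≤ ∑ p ∈ S, 2 * (P p.1 p.2 ^ 2 - P (π p.1) (π p.2) * P p.1 p.2) := by
    have hterm2 : ∑ p ∈ S, 2 * (P (π p.1) (π p.2) * P p.1 p.2)
        ≤ ∑ p ∈ S, (P p.1 p.2 ^ 2 + P (π p.1) (π p.2) ^ 2) :=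
      Finset.sum_le_sum fun p _ => by nlinarith [sq_nonneg (P p.1 p.2 - P (π p.1) (π p.2))]
    have e3 : ∑ p ∈ S, 2 * (P p.1 p.2 ^ 2 - P (π p.1) (π p.2) * P p.1 p.2)
        = ∑ p ∈ S, (2 * P p.1 p.2 ^ 2) - ∑ p ∈ S, 2 * (P (π p.1) (π p.2) * P p.1 p.2) := by
      rw [← Finset.sum_sub_distrib]
      exact Finset.sum_congr rfl fun p _ => by ring
    have e4 : ∑ p ∈ S, (P p.1 p.2 ^ 2 + P (π p.1) (π p.2) ^ 2)
        = ∑ p ∈ S, (2 * P p.1 p.2 ^ 2) := by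
      rw [Finset.sum_add_distrib, hswapsum]
      rw [← Finset.sum_add_distrib]
      exact Finset.sum_congr rfl fun p _ => by ring
    rw [e3]
    rw [e4] at hterm2
    linarith
  -- Step 6: the correlation part is at least ε · |S|
  have hcorrsum : (S.card : ℝ) * ε ≤ ∑ p ∈ S, 2 * R p.1 p.2 * P p.1 p.2 * (1 - P p.1 p.2) := by
    have := Finset.card_nsmul_le_sum S
      (fun p => 2 * R p.1 p.2 * P p.1 p.2 * (1 - P p.1 p.2)) ε
      (fun p hp => by
        simp only [hS, Finset.mem_filter, Finset.mem_univ, true_and] at hp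
        exact hε.1 p.1 p.2 hp.1)
    simpa [nsmul_eq_mul] using this
  -- Step 7: |S| = 2 · (target quantity), and conclude
  have hcard : ((S.card : ℝ))
      = 2 * (((n : ℝ) - k) * k + (k : ℝ) * ((k : ℝ) - 1) / 2 - T) :=
    CorrERAux.card_S π k T hk hT
  have hεpos : 0 < ε := by
    obtain ⟨i, j, hij, he⟩ := hε.2
    have h3 := hP i j hij
    have h4 := hR i j hij
    rw [he]
    have h5 : (0:ℝ) < 1 - P i j := by linarith [h3.2]
    have := mul_pos (mul_pos (mul_pos (by norm_num : (0:ℝ) < 2) h4) h3.1) h5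
    linarith
  have hXnn : 0 ≤ ((n : ℝ) - k) * k + (k : ℝ) * ((k : ℝ) - 1) / 2 - T := by
    have : (0 : ℝ) ≤ (S.card : ℝ) := Nat.cast_nonneg _
    linarith [hcard]
  have hfinal : ε * (((n : ℝ) - k) * k + (k : ℝ) * ((k : ℝ) - 1) / 2 - T)
      ≤ (S.card : ℝ) * ε := by
    rw [hcard]
    nlinarith [mul_nonneg hεpos.le hXnn]
  linarith [hquad, hcorrsum, hfinal]
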